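/- Let G be an infinite countable amenable group and let T₁, T₂ be finite tilings of G such that T₂ is primely congruent with T₁ (every tile of T₂ is a union of tiles of T₁, and each shape of T₂ is partitioned by shapes of T₁ in a unique way). Then the subshift (X_{T₁}, G) is a topological factor of (X_{T₂}, G). -/

import Mathlib

open Filter Topology Pointwise ENNReal

/-- A Følner sequence for a group `G`. -/
def IsFolnerSeq (G : Type*) [Group G] (F : ℕ → Finset G) : Prop :=
  (∀ n, (F n).Nonempty) ∧
    ∀ g : G, Filter.Tendsto
      (fun n => ((symmDiff (g • ((F n) : Set G)) ((F n) : Set G)).ncard : ℝ) / (F n).card)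
      Filter.atTop (nhds 0)

/-- A group is amenable if it admits a Følner sequence. -/
def IsAmenable (G : Type*) [Group G] : Prop := ∃ F : ℕ → Finset G, IsFolnerSeq G F

variable {G : Type*} [Group G]

/-- The `K`-boundary of a finite set `A`. -/
def kBoundary (A K : Finset G) : Set G :=
  {g : G | (∃ k ∈ K, k * g ∈ A) ∧ ∃ k ∈ K, k * g ∉ A}

/-- `A` is `(K, δ)`-invariant. -/
def InvariantSet (A K : Finset G) (δ : ℝ) : Prop :=
  ((kBoundary A K).ncard : ℝ) < δ * A.card

/-- A subset of a group is syndetic if finitely many translates cover the group. -/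
def Syndetic (A : Set G) : Prop := ∃ F : Finset G, (F : Set G) * A = Set.univ

/-- A finite tiling of a group `G`: a partition of `G` into right translates of
finitely many finite shapes, each shape containing the identity. -/
structure FiniteTiling (G : Type*) [Group G] where
  tiles : Set (Set G)
  shapes : Finset (Finset G)
  covers : ∀ g : G, ∃! t, t ∈ tiles ∧ g ∈ t
  tile_shape : ∀ t ∈ tiles, ∃ S ∈ shapes, ∃ c : G, t = (S : Set G) * {c}
  one_mem_shape : ∀ S ∈ shapes, (1 : G) ∈ S

/-- The set of centers of a shape `S` in a tiling. -/
def FiniteTiling.center (T : FiniteTiling G) (S : Finset G) : Set G :=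
  {c : G | ((S : Set G) * {c}) ∈ T.tiles}

/-- A finite tiling is irreducible if every sufficiently invariant finite set
contains a tile of every shape. -/
def FiniteTiling.IsIrreducible (T : FiniteTiling G) : Prop :=
  ∃ (T₀ : Finset G) (ε : ℝ), 0 < ε ∧
    ∀ F : Finset G, InvariantSet F T₀ ε →
      ∀ S ∈ T.shapes, ∃ c ∈ T.center S, (S : Set G) * {c} ⊆ (F : Set G)

/-- The shift action of `G` on `A^G`: `(c • x) g = x (g * c)`. -/
def shiftAct {A : Type*} (c : G) (x : G → A) : G → A := fun g => x (g * c)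

instance : TopologicalSpace (Option (Finset G)) := ⊥

open Classical in
/-- The point of `(S(T) ∪ {0})^G` encoding the centers of a tiling. -/
noncomputable def FiniteTiling.point (T : FiniteTiling G) : G → Option (Finset G) :=
  fun g => if h : ∃ S, S ∈ T.shapes ∧ g ∈ T.center S then some h.choose else none

/-- The subshift associated with a finite tiling: the orbit closure of `T.point`. -/
noncomputable def FiniteTiling.subshift (T : FiniteTiling G) : Set (G → Option (Finset G)) :=
  closure (Set.range fun c : G => shiftAct c T.point)

/-- `T₂` is primely congruent with `T₁`: tiles of `T₂` are unions of tiles of `T₁`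
and each shape of `T₂` has a unique master partition by tiles of `T₁`. -/
def PrimelyCongruent (T₁ T₂ : FiniteTiling G) : Prop :=
  (∀ t₁ ∈ T₁.tiles, ∀ t₂ ∈ T₂.tiles, (t₁ ∩ t₂).Nonempty → t₁ ⊆ t₂) ∧
  ∀ S ∈ T₂.shapes, ∀ c c' : G, c ∈ T₂.center S → c' ∈ T₂.center S →
    {u : Set G | ∃ t ∈ T₁.tiles, t ⊆ (S : Set G) * {c} ∧ u = t * {c⁻¹}} =
    {u : Set G | ∃ t ∈ T₁.tiles, t ⊆ (S : Set G) * {c'} ∧ u = t * {c'⁻¹}}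

/-- Number of patterns of a subshift on a finite window `F`. -/
noncomputable def patternCount {A : Type*} (X : Set (G → A)) (F : Finset G) : ℕ :=
  {p : ↑F → A | ∃ x ∈ X, ∀ g : ↑F, x (g : G) = p g}.ncard

section Dim

variable {Y : Type*} [TopologicalSpace Y]

/-- `β` is a finite open cover of the set `X`. -/
def IsOpenCoverOf (X : Set Y) (β : Finset (Set Y)) : Prop :=
  (∀ U ∈ β, IsOpen U) ∧ X ⊆ ⋃ U ∈ β, U

/-- The order of a finite cover on a set `X`. -/
noncomputable def ordOn (X : Set Y) (β : Finset (Set Y)) : ℕ :=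
  ⨆ y : X, ({U : Set Y | U ∈ β ∧ (y : Y) ∈ U}.ncard - 1)

/-- `D(α)`: minimal order among finite open covers of `X` refining `α`. -/
noncomputable def Dcov (X : Set Y) (α : Finset (Set Y)) : ℕ :=
  sInf {n | ∃ β : Finset (Set Y), IsOpenCoverOf X β ∧
    (∀ U ∈ β, ∃ V ∈ α, U ⊆ V) ∧ ordOn X β = n}

/-- The topological (covering) dimension of a subset `X` of a topological space. -/
noncomputable def topDim (X : Set Y) : ℕ∞ :=
  ⨆ α ∈ {α : Finset (Set Y) | IsOpenCoverOf X α}, (Dcov X α : ℕ∞)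

/-- The join `⋁_{g ∈ F} (σ g)⁻¹ α` of the pullbacks of a finite cover along an action. -/
noncomputable def FCover {H : Type*} (σ : H → Y → Y) (F : Finset H) (α : Finset (Set Y)) :
    Finset (Set Y) :=
  letI := Classical.decEq H
  letI := Classical.decEq (Set Y)
  (F.pi fun _ => α).image fun f => ⋂ g, ⋂ (h : g ∈ F), σ g ⁻¹' f g h

/-- Mean topological dimension of `X` with respect to an action `σ` of `G`,
computed along the Følner sequence `Fo`. -/
noncomputable def mdim {H : Type*} (σ : H → Y → Y) (X : Set Y) (Fo : ℕ → Finset H) : ℝ≥0∞ :=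
  ⨆ α ∈ {α : Finset (Set Y) | IsOpenCoverOf X α},
    Filter.limsup
      (fun n => (Dcov X (FCover σ (Fo n) α) : ℝ≥0∞) / ((Fo n).card : ℝ≥0∞))
      Filter.atTop

end Dim

/-- A polyhedron: a finite union of simplices (convex hulls of finite sets) in a
Euclidean space. -/
def IsPolyhedron {N : ℕ} (P : Set (EuclideanSpace ℝ (Fin N))) : Prop :=
  ∃ S : Finset (Finset (EuclideanSpace ℝ (Fin N))),
    P = ⋃ s ∈ S, convexHull ℝ (s : Set (EuclideanSpace ℝ (Fin N)))

/-- The upper (Banach) density of a subset of an amenable group. -/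
noncomputable def upperDensity (G : Type*) [Group G] (J : Set G) : ℝ :=
  sSup {r : ℝ | ∃ Fo : ℕ → Finset G, IsFolnerSeq G Fo ∧
    r = Filter.limsup (fun n => ((J ∩ (Fo n : Set G)).ncard : ℝ) / (Fo n).card) Filter.atTop}


section AuxFactor

variable {G : Type*} [Group G]

instance : DiscreteTopology (Option (Finset G)) := ⟨rfl⟩

private lemma mul_singleton_mul (s : Set G) (a b : G) : s * {a} * {b} = s * {a * b} := by
  rw [mul_assoc, Set.singleton_mul_singleton]

private lemma mul_singleton_inv_cancel (s : Set G) (a : G) : s * {a} * {a⁻¹} = s := by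
  rw [mul_singleton_mul, mul_inv_cancel, Set.singleton_one, mul_one]

private lemma mul_singleton_inv_cancel' (s : Set G) (a : G) : s * {a⁻¹} * {a} = s := by
  rw [mul_singleton_mul, inv_mul_cancel, Set.singleton_one, mul_one]

private lemma set_mul_singleton_cancel {s t : Set G} {a : G} (h : s * {a} = t * {a}) :
    s = t := by
  calc s = s * {a} * {a⁻¹} := (mul_singleton_inv_cancel s a).symm
    _ = t * {a} * {a⁻¹} := by rw [h]
    _ = t := mul_singleton_inv_cancel t a

private lemma self_mem_mul_singleton {S : Finset G} (h1 : (1 : G) ∈ S) (g : G) :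
    g ∈ (S : Set G) * {g} :=
  ⟨1, h1, g, rfl, one_mul g⟩

private lemma center_unique (T : FiniteTiling G) {S S' : Finset G} (hS : S ∈ T.shapes)
    (hS' : S' ∈ T.shapes) {g : G} (hg : g ∈ T.center S) (hg' : g ∈ T.center S') :
    S = S' := by
  obtain ⟨t0, _, huniq⟩ := T.covers g
  have e1 := huniq ((S : Set G) * {g}) ⟨hg, self_mem_mul_singleton (T.one_mem_shape S hS) g⟩
  have e2 := huniq ((S' : Set G) * {g}) ⟨hg', self_mem_mul_singleton (T.one_mem_shape S' hS') g⟩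
  exact Finset.coe_injective (set_mul_singleton_cancel (e1.trans e2.symm))

private lemma point_eq_some_iff (T : FiniteTiling G) {g : G} {S : Finset G} :
    T.point g = some S ↔ S ∈ T.shapes ∧ g ∈ T.center S := by
  unfold FiniteTiling.point
  constructor
  · intro hp
    split_ifs at hp with hex
    · have hspec := hex.choose_spec
      obtain rfl : hex.choose = S := Option.some_injective _ hp
      exact hspec
  · rintro ⟨hS, hc⟩
    split_ifs with hex
    · have hspec := hex.choose_spec
      exact congrArg some (center_unique T hspec.1 hS hspec.2 hc)
    · exact absurd ⟨S, hS, hc⟩ hex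

/-- The window of the local rule. -/
def window (T₂ : FiniteTiling G) (g : G) : Set G := ⋃ S ∈ T₂.shapes, ((S : Set G))⁻¹ * {g}

/-- The master partition of the shape `S` of `T₂` by shapes of `T₁`. -/
def masterPart (T₁ T₂ : FiniteTiling G) (S : Finset G) : Set (Set G) :=
  {u | ∃ t ∈ T₁.tiles, ∃ c ∈ T₂.center S, t ⊆ (S : Set G) * {c} ∧ u = t * {c⁻¹}}

/-- The local rule of the factor map. -/
def Pred (T₁ T₂ : FiniteTiling G) (x : G → Option (Finset G)) (g : G) (S₁ : Finset G) :
    Prop :=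
  ∃ h : G, ∃ S : Finset G, x h = some S ∧ S ∈ T₂.shapes ∧ S₁ ∈ T₁.shapes ∧
    (S₁ : Set G) * {g * h⁻¹} ∈ masterPart T₁ T₂ S

open Classical in
/-- The factor map. -/
noncomputable def piMap (T₁ T₂ : FiniteTiling G) (x : G → Option (Finset G)) :
    G → Option (Finset G) := fun g =>
  if hx : ∃ S₁, Pred T₁ T₂ x g S₁ then some hx.choose else none

private lemma dite_choose_congr {α : Type*} {p q : α → Prop}
    {i1 : Decidable (∃ a, p a)} {i2 : Decidable (∃ a, q a)} (h : p = q) :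
    (@dite _ (∃ a, p a) i1 (fun h1 => some h1.choose) (fun _ => none) : Option α) =
    @dite _ (∃ a, q a) i2 (fun h2 => some h2.choose) (fun _ => none) := by
  subst h
  rw [Subsingleton.elim i1 i2]

private lemma pred_shift (T₁ T₂ : FiniteTiling G) (x : G → Option (Finset G)) (c g : G) :
    Pred T₁ T₂ (shiftAct c x) g = Pred T₁ T₂ x (g * c) := by
  funext S₁
  apply propext
  constructor
  · rintro ⟨h0, S, hx, hS, hS₁, hm⟩
    refine ⟨h0 * c, S, hx, hS, hS₁, ?_⟩
    have he : g * c * (h0 * c)⁻¹ = g * h0⁻¹ := by group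
    rw [he]; exact hm
  · rintro ⟨h0, S, hx, hS, hS₁, hm⟩
    refine ⟨h0 * c⁻¹, S, ?_, hS, hS₁, ?_⟩
    · simpa [shiftAct, mul_assoc] using hx
    · have he : g * (h0 * c⁻¹)⁻¹ = g * c * h0⁻¹ := by group
      rw [he]; exact hm

private lemma piMap_shift (T₁ T₂ : FiniteTiling G) (x : G → Option (Finset G)) (c : G) :
    piMap T₁ T₂ (shiftAct c x) = shiftAct c (piMap T₁ T₂ x) := by
  funext g
  exact dite_choose_congr (pred_shift T₁ T₂ x c g)

private lemma pred_point (T₁ T₂ : FiniteTiling G) (h : PrimelyCongruent T₁ T₂) (g : G) :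
    Pred T₁ T₂ T₂.point g = fun S₁ => S₁ ∈ T₁.shapes ∧ g ∈ T₁.center S₁ := by
  funext S₁
  apply propext
  constructor
  · rintro ⟨h0, S, hx, hS, hS₁, t, ht, c, hc, htc, hu⟩
    refine ⟨hS₁, ?_⟩
    have hpt := (point_eq_some_iff T₂).1 hx
    have heq := h.2 S hS c h0 hc hpt.2
    have hmem : (S₁ : Set G) * {g * h0⁻¹} ∈
        {u : Set G | ∃ t ∈ T₁.tiles, t ⊆ (S : Set G) * {c} ∧ u = t * {c⁻¹}} :=
      ⟨t, ht, htc, hu⟩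
    rw [heq] at hmem
    obtain ⟨t', ht', _, hu'⟩ := hmem
    have hte : (S₁ : Set G) * {g} = t' := by
      calc (S₁ : Set G) * {g} = (S₁ : Set G) * {g * h0⁻¹} * {h0} := by
            rw [mul_singleton_mul, inv_mul_cancel_right]
        _ = t' * {h0⁻¹} * {h0} := by rw [hu']
        _ = t' := mul_singleton_inv_cancel' t' h0
    show ((S₁ : Finset G) : Set G) * {g} ∈ T₁.tiles
    rw [hte]; exact ht'
  · rintro ⟨hS₁, hg⟩
    obtain ⟨t₂, ⟨ht₂, hgt₂⟩, _⟩ := T₂.covers g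
    obtain ⟨S, hS, c, rfl⟩ := T₂.tile_shape t₂ ht₂
    have hc : c ∈ T₂.center S := ht₂
    have hsub : (S₁ : Set G) * {g} ⊆ (S : Set G) * {c} :=
      h.1 _ hg _ ht₂ ⟨g, self_mem_mul_singleton (T₁.one_mem_shape S₁ hS₁) g, hgt₂⟩
    refine ⟨c, S, (point_eq_some_iff T₂).2 ⟨hS, hc⟩, hS, hS₁,
      (S₁ : Set G) * {g}, hg, c, hc, hsub, ?_⟩
    rw [mul_singleton_mul]

private lemma piMap_point (T₁ T₂ : FiniteTiling G) (h : PrimelyCongruent T₁ T₂) :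
    piMap T₁ T₂ T₂.point = T₁.point := by
  funext g
  unfold piMap FiniteTiling.point
  exact dite_choose_congr (pred_point T₁ T₂ h g)

private lemma pred_local_aux (T₁ T₂ : FiniteTiling G) {x x' : G → Option (Finset G)} (g : G)
    (hxx : ∀ h0 ∈ window T₂ g, x h0 = x' h0) (S₁ : Finset G)
    (hp : Pred T₁ T₂ x g S₁) : Pred T₁ T₂ x' g S₁ := by
  obtain ⟨h0, S, hx, hS, hS₁, t, ht, c, hc, htc, hu⟩ := hp
  have hgm : g * h0⁻¹ ∈ (S : Set G) := by
    have h1 : g * h0⁻¹ ∈ (S₁ : Set G) * {g * h0⁻¹} :=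
      self_mem_mul_singleton (T₁.one_mem_shape S₁ hS₁) _
    rw [hu] at h1
    have h2 : t * {c⁻¹} ⊆ (S : Set G) * {c} * {c⁻¹} := Set.mul_subset_mul_right htc
    have h3 : (S : Set G) * {c} * {c⁻¹} = (S : Set G) := mul_singleton_inv_cancel _ c
    rw [h3] at h2
    exact h2 h1
  have hmemW : h0 ∈ window T₂ g := by
    refine Set.mem_biUnion hS ⟨(g * h0⁻¹)⁻¹, ?_, g, rfl, by group⟩
    simpa using hgm
  exact ⟨h0, S, (hxx h0 hmemW) ▸ hx, hS, hS₁, t, ht, c, hc, htc, hu⟩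

private lemma pred_local (T₁ T₂ : FiniteTiling G) {x x' : G → Option (Finset G)} (g : G)
    (hxx : ∀ h0 ∈ window T₂ g, x h0 = x' h0) :
    Pred T₁ T₂ x g = Pred T₁ T₂ x' g := by
  funext S₁
  exact propext ⟨pred_local_aux T₁ T₂ g hxx S₁,
    pred_local_aux T₁ T₂ g (fun h0 hh0 => (hxx h0 hh0).symm) S₁⟩

private lemma piMap_continuous (T₁ T₂ : FiniteTiling G) : Continuous (piMap T₁ T₂) := by
  classical
  apply continuous_pi
  intro g
  have hWfin : (window T₂ g).Finite :=
    Set.Finite.biUnion T₂.shapes.finite_toSet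
      (fun S _ => (S.finite_toSet.inv.mul (Set.finite_singleton g)))
  haveI := hWfin.to_subtype
  have hfac : (fun x => piMap T₁ T₂ x g) =
      (fun y : window T₂ g → Option (Finset G) =>
        piMap T₁ T₂ (fun h0 => if hh : h0 ∈ window T₂ g then y ⟨h0, hh⟩ else none) g) ∘
      (fun x (w : window T₂ g) => x (w : G)) := by
    funext x
    refine dite_choose_congr (pred_local T₁ T₂ g ?_)
    intro h0 hh0
    split
    · rfl
    · next hh => exact absurd hh0 hh
  rw [hfac]
  exact continuous_of_discreteTopology.comp (continuous_pi fun w => continuous_apply _)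

private lemma point_mem_alphabet (T : FiniteTiling G) (g : G) :
    T.point g ∈ insert none (some '' (T.shapes : Set (Finset G))) := by
  unfold FiniteTiling.point
  split_ifs with hex
  · exact Set.mem_insert_of_mem _ ⟨hex.choose, hex.choose_spec.1, rfl⟩
  · exact Set.mem_insert _ _

private lemma subshift_compact (T : FiniteTiling G) : IsCompact T.subshift := by
  set A : Set (Option (Finset G)) := insert none (some '' (T.shapes : Set (Finset G))) with hA
  have hAfin : A.Finite := (T.shapes.finite_toSet.image some).insert none
  set K : Set (G → Option (Finset G)) := Set.pi Set.univ (fun _ => A) with hK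
  have hKcl : IsClosed K := isClosed_set_pi (fun _ _ => hAfin.isClosed)
  have hKcp : IsCompact K := isCompact_univ_pi (fun _ => hAfin.isCompact)
  have hsub : T.subshift ⊆ K := by
    apply closure_minimal _ hKcl
    rintro x ⟨c, rfl⟩
    intro g _
    exact point_mem_alphabet T (g * c)
  exact hKcp.of_isClosed_subset isClosed_closure hsub

end AuxFactor

/-- If `T₂` is primely congruent with `T₁` then `X_{T₁}` is a
topological factor of `X_{T₂}`. -/
theorem primely_congruent_factor
    {G : Type*} [Group G] [Countable G] [Infinite G] (hG : IsAmenable G)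
    (T₁ T₂ : FiniteTiling G) (h : PrimelyCongruent T₁ T₂) :
    ∃ π : (G → Option (Finset G)) → (G → Option (Finset G)),
      ContinuousOn π T₂.subshift ∧ π '' T₂.subshift = T₁.subshift ∧
      ∀ x ∈ T₂.subshift, ∀ c : G, π (shiftAct c x) = shiftAct c (π x) := by
  refine ⟨piMap T₁ T₂, (piMap_continuous T₁ T₂).continuousOn, ?_, ?_⟩
  · -- image equals T₁.subshift
    have hcomp : (fun c : G => piMap T₁ T₂ (shiftAct c T₂.point)) =
        (fun c : G => shiftAct c T₁.point) := by
      funext c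
      rw [piMap_shift, piMap_point T₁ T₂ h]
    have himrange : piMap T₁ T₂ '' Set.range (fun c : G => shiftAct c T₂.point) =
        Set.range (fun c : G => shiftAct c T₁.point) := by
      rw [← Set.range_comp]
      exact congrArg Set.range hcomp
    apply Set.Subset.antisymm
    · calc piMap T₁ T₂ '' T₂.subshift
          ⊆ closure (piMap T₁ T₂ '' Set.range (fun c : G => shiftAct c T₂.point)) :=
            image_closure_subset_closure_image (piMap_continuous T₁ T₂)
        _ = T₁.subshift := by rw [himrange]; rfl
    · have hclosed : IsClosed (piMap T₁ T₂ '' T₂.subshift) :=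
        ((subshift_compact T₂).image (piMap_continuous T₁ T₂)).isClosed
      have hsub : Set.range (fun c : G => shiftAct c T₁.point) ⊆
          piMap T₁ T₂ '' T₂.subshift := by
        rw [← himrange]
        exact Set.image_mono subset_closure
      exact closure_minimal hsub hclosed
  · intro x _ c
    exact piMap_shift T₁ T₂ x c
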